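/- For every λ̄μμ̃-term t, the composite translation (t∘)† (first translating λ̄μμ̃ to λμ via (·)∘, then back via (·)†) reduces to t by zero or more linear λ̄μμ̃-reduction steps; the analogous statement holds for λ̄μμ̃-commands and λ̄μμ̃-contexts. -/

import Mathlib

set_option autoImplicit true

namespace CHSim

/-- Lift a de Bruijn renaming under a binder. -/
def upr (ξ : ℕ → ℕ) : ℕ → ℕ
  | 0 => 0
  | k+1 => ξ k + 1

/-! ## The λμ-calculus (de Bruijn representation).

λ-variables and μ-variables each have their own name space of de Bruijn
indices.  `abs t` is `λx.t` (binding λ-index 0) and `mabs c` is `μα.c`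
(binding μ-index 0); `cmd a t` is the command `[a]t`. -/

mutual
  inductive Tm : Type
    | var : ℕ → Tm
    | abs : Tm → Tm
    | app : Tm → Tm → Tm
    | mabs : Cm → Tm
  inductive Cm : Type
    | cmd : ℕ → Tm → Cm
end

/-- λμ-contexts `e ::= ⟨α⟩ | ⟨β⟩(t ·) | e · t`. -/
inductive Ct : Type
  | cvar : ℕ → Ct
  | push : ℕ → Tm → Ct
  | cons : Ct → Tm → Ct

/-- Filling a λμ-context with a term: `⟨α⟩⟨t⟩ = [α]t`,
`(⟨β⟩(u ·))⟨t⟩ = [β](u t)`, `(h · u)⟨t⟩ = h⟨t u⟩`. -/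
def fill : Ct → Tm → Cm
  | .cvar a, t => .cmd a t
  | .push b u, t => .cmd b (.app u t)
  | .cons h u, t => fill h (.app t u)

mutual
  /-- Renaming of λ-variables in λμ-terms. -/
  def renLT (ξ : ℕ → ℕ) : Tm → Tm
    | .var x => .var (ξ x)
    | .abs t => .abs (renLT (upr ξ) t)
    | .app t u => .app (renLT ξ t) (renLT ξ u)
    | .mabs c => .mabs (renLC ξ c)
  /-- Renaming of λ-variables in λμ-commands. -/
  def renLC (ξ : ℕ → ℕ) : Cm → Cm
    | .cmd a t => .cmd a (renLT ξ t)
end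

mutual
  /-- Renaming of μ-variables in λμ-terms. -/
  def renMT (ξ : ℕ → ℕ) : Tm → Tm
    | .var x => .var x
    | .abs t => .abs (renMT ξ t)
    | .app t u => .app (renMT ξ t) (renMT ξ u)
    | .mabs c => .mabs (renMC (upr ξ) c)
  /-- Renaming of μ-variables in λμ-commands. -/
  def renMC (ξ : ℕ → ℕ) : Cm → Cm
    | .cmd a t => .cmd (ξ a) (renMT ξ t)
end

/-- Renaming of λ-variables in λμ-contexts. -/
def renLE (ξ : ℕ → ℕ) : Ct → Ct
  | .cvar a => .cvar a
  | .push b t => .push b (renLT ξ t)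
  | .cons e t => .cons (renLE ξ e) (renLT ξ t)

/-- Renaming of μ-variables in λμ-contexts. -/
def renME (ξ : ℕ → ℕ) : Ct → Ct
  | .cvar a => .cvar (ξ a)
  | .push b t => .push (ξ b) (renMT ξ t)
  | .cons e t => .cons (renME ξ e) (renMT ξ t)

/-- Lifting a λ-substitution under a λ-binder. -/
def upsL (σ : ℕ → Tm) : ℕ → Tm
  | 0 => .var 0
  | k+1 => renLT Nat.succ (σ k)

mutual
  /-- (Capture-avoiding) substitution for λ-variables in λμ-terms. -/
  def lsubT (σ : ℕ → Tm) : Tm → Tm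
    | .var x => σ x
    | .abs t => .abs (lsubT (upsL σ) t)
    | .app t u => .app (lsubT σ t) (lsubT σ u)
    | .mabs c => .mabs (lsubC (fun k => renMT Nat.succ (σ k)) c)
  /-- Substitution for λ-variables in λμ-commands. -/
  def lsubC (σ : ℕ → Tm) : Cm → Cm
    | .cmd a t => .cmd a (lsubT σ t)
end

/-- Substitution for λ-variables in λμ-contexts. -/
def lsubE (σ : ℕ → Tm) : Ct → Ct
  | .cvar a => .cvar a
  | .push b t => .push b (lsubT σ t)
  | .cons e t => .cons (lsubE σ e) (lsubT σ t)

/-- The substitution replacing the λ-variable `x` by `u`. -/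
def sub1L (x : ℕ) (u : Tm) : ℕ → Tm := fun k => if k = x then u else .var k

/-- The β-substitution replacing the bound λ-variable 0 by `u`. -/
def sub0L (u : Tm) : ℕ → Tm
  | 0 => u
  | k+1 => .var k

/-- Lifting a structural (μ-)substitution under a μ-binder. -/
def upsM (σ : ℕ → Ct) : ℕ → Ct
  | 0 => .cvar 0
  | k+1 => renME Nat.succ (σ k)

mutual
  /-- Structural substitution of λμ-contexts for μ-variables in λμ-terms:
  every subcommand `[α]u` is replaced by `(σ α)⟨u[σ]⟩`. -/
  def msubT (σ : ℕ → Ct) : Tm → Tm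
    | .var x => .var x
    | .abs t => .abs (msubT (fun k => renLE Nat.succ (σ k)) t)
    | .app t u => .app (msubT σ t) (msubT σ u)
    | .mabs c => .mabs (msubC (upsM σ) c)
  /-- Structural substitution in λμ-commands. -/
  def msubC (σ : ℕ → Ct) : Cm → Cm
    | .cmd a t => fill (σ a) (msubT σ t)
end

/-- Structural substitution in λμ-contexts (the head variable of
`⟨β⟩(t ·)` is, by the freshness convention of the translations,
never the substituted variable, so it is left untouched). -/
def msubE (σ : ℕ → Ct) : Ct → Ct
  | .cvar a => σ a
  | .push b t => .push b (msubT σ t)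
  | .cons e t => .cons (msubE σ e) (msubT σ t)

/-- The structural substitution replacing the μ-variable `a` by the context `e`. -/
def sub1M (a : ℕ) (e : Ct) : ℕ → Ct := fun k => if k = a then e else .cvar k

/-- The structural substitution replacing the bound μ-variable 0 by the
context `e` (removing the binder). -/
def sub0M (e : Ct) : ℕ → Ct
  | 0 => e
  | k+1 => .cvar k

mutual
  /-- Number of free occurrences of the λ-variable `x` in a λμ-term. -/
  def cntLT (x : ℕ) : Tm → ℕ
    | .var y => if y = x then 1 else 0
    | .abs t => cntLT (x+1) t
    | .app t u => cntLT x t + cntLT x u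
    | .mabs c => cntLC x c
  /-- Number of free occurrences of the λ-variable `x` in a λμ-command. -/
  def cntLC (x : ℕ) : Cm → ℕ
    | .cmd _ t => cntLT x t
end

/-- λμ-values `v ::= x | λx.t`. -/
inductive IsVal : Tm → Prop
  | var (x : ℕ) : IsVal (.var x)
  | abs (t : Tm) : IsVal (.abs t)

/-! ### Reduction in λμ: congruence closure of root rules -/

mutual
  /-- Congruence (compatible) closure of root relations, term level. -/
  inductive KT (R1 : Tm → Tm → Prop) (R2 : Cm → Cm → Prop) : Tm → Tm → Prop
    | root {t t'} : R1 t t' → KT R1 R2 t t'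
    | absC {t t'} : KT R1 R2 t t' → KT R1 R2 (.abs t) (.abs t')
    | appL {t t'} (u) : KT R1 R2 t t' → KT R1 R2 (.app t u) (.app t' u)
    | appR (t) {u u'} : KT R1 R2 u u' → KT R1 R2 (.app t u) (.app t u')
    | mabsC {c c'} : KC R1 R2 c c' → KT R1 R2 (.mabs c) (.mabs c')
  /-- Congruence (compatible) closure of root relations, command level. -/
  inductive KC (R1 : Tm → Tm → Prop) (R2 : Cm → Cm → Prop) : Cm → Cm → Prop
    | root {c c'} : R2 c c' → KC R1 R2 c c'
    | cmdC (a) {t t'} : KT R1 R2 t t' → KC R1 R2 (.cmd a t) (.cmd a t')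
end

/-- Term-level root rules of the undirected λμ-calculus: β, μ, μ', θ. -/
inductive RootT : Tm → Tm → Prop
  | beta (u t : Tm) : RootT (.app (.abs u) t) (lsubT (sub0L t) u)
  | mu (c : Cm) (t : Tm) : RootT (.app (.mabs c) t)
      (.mabs (msubC (sub1M 0 (.cons (.cvar 0) (renMT Nat.succ t))) c))
  | mu' (t : Tm) (c : Cm) : RootT (.app t (.mabs c))
      (.mabs (msubC (sub1M 0 (.push 0 (renMT Nat.succ t))) c))
  | theta (t : Tm) : RootT (.mabs (.cmd 0 (renMT Nat.succ t))) t

/-- Command-level root rule of the λμ-calculus: ρ. -/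
inductive RootC : Cm → Cm → Prop
  | rho (b : ℕ) (c : Cm) : RootC (.cmd b (.mabs c)) (msubC (sub0M (.cvar b)) c)

/-- Term-level *linear* root rules of the λμ-calculus: θ, and β when the
argument is a variable or the bound variable occurs exactly once. -/
inductive RootTlin : Tm → Tm → Prop
  | beta (u t : Tm) : ((∃ y, t = Tm.var y) ∨ cntLT 0 u = 1) →
      RootTlin (.app (.abs u) t) (lsubT (sub0L t) u)
  | theta (t : Tm) : RootTlin (.mabs (.cmd 0 (renMT Nat.succ t))) t

/-- Term-level root rules of call-by-name λμ: β, μ, θ (no μ'). -/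
inductive RootTn : Tm → Tm → Prop
  | beta (u t : Tm) : RootTn (.app (.abs u) t) (lsubT (sub0L t) u)
  | mu (c : Cm) (t : Tm) : RootTn (.app (.mabs c) t)
      (.mabs (msubC (sub1M 0 (.cons (.cvar 0) (renMT Nat.succ t))) c))
  | theta (t : Tm) : RootTn (.mabs (.cmd 0 (renMT Nat.succ t))) t

/-- Term-level root rules of call-by-value λμ: βv, μv, μ', θ. -/
inductive RootTv : Tm → Tm → Prop
  | betav (u t : Tm) : IsVal t → RootTv (.app (.abs u) t) (lsubT (sub0L t) u)
  | muv (c : Cm) (t : Tm) : IsVal t → RootTv (.app (.mabs c) t)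
      (.mabs (msubC (sub1M 0 (.cons (.cvar 0) (renMT Nat.succ t))) c))
  | mu' (t : Tm) (c : Cm) : RootTv (.app t (.mabs c))
      (.mabs (msubC (sub1M 0 (.push 0 (renMT Nat.succ t))) c))
  | theta (t : Tm) : RootTv (.mabs (.cmd 0 (renMT Nat.succ t))) t

/-- Term-level *linear call-by-value* root rules of λμ. -/
inductive RootTvlin : Tm → Tm → Prop
  | betav (u t : Tm) : IsVal t → ((∃ y, t = Tm.var y) ∨ cntLT 0 u = 1) →
      RootTvlin (.app (.abs u) t) (lsubT (sub0L t) u)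
  | theta (t : Tm) : RootTvlin (.mabs (.cmd 0 (renMT Nat.succ t))) t

/-- One-step λμ-reduction (β, μ, μ', ρ, θ), terms. -/
abbrev StepT := KT RootT RootC
/-- One-step λμ-reduction (β, μ, μ', ρ, θ), commands. -/
abbrev StepC := KC RootT RootC
/-- One-step linear λμ-reduction, terms. -/
abbrev LStepT := KT RootTlin RootC
/-- One-step linear λμ-reduction, commands. -/
abbrev LStepC := KC RootTlin RootC
/-- One-step call-by-name λμ-reduction, terms. -/
abbrev StepNT := KT RootTn RootC
/-- One-step call-by-name λμ-reduction, commands. -/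
abbrev StepNC := KC RootTn RootC
/-- One-step call-by-value λμ-reduction, terms. -/
abbrev StepVT := KT RootTv RootC
/-- One-step call-by-value λμ-reduction, commands. -/
abbrev StepVC := KC RootTv RootC
/-- One-step linear call-by-value λμ-reduction, terms. -/
abbrev LStepVT := KT RootTvlin RootC
/-- One-step linear call-by-value λμ-reduction, commands. -/
abbrev LStepVC := KC RootTvlin RootC

/-- Reflexive-transitive closure. -/
abbrev Star {α : Type} (r : α → α → Prop) : α → α → Prop := Relation.ReflTransGen r

/-! ## The λ̄μμ̃-calculus (de Bruijn representation). -/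

mutual
  inductive BTm : Type
    | var : ℕ → BTm
    | abs : BTm → BTm
    | mabs : BCm → BTm
  inductive BCm : Type
    | cut : BTm → BCt → BCm
  inductive BCt : Type
    | cvar : ℕ → BCt
    | cons : BTm → BCt → BCt
    | tmu : BCm → BCt
end

mutual
  /-- Renaming of λ-variables in λ̄μμ̃-terms. -/
  def brenLT (ξ : ℕ → ℕ) : BTm → BTm
    | .var x => .var (ξ x)
    | .abs t => .abs (brenLT (upr ξ) t)
    | .mabs c => .mabs (brenLC ξ c)
  def brenLC (ξ : ℕ → ℕ) : BCm → BCm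
    | .cut t e => .cut (brenLT ξ t) (brenLE ξ e)
  def brenLE (ξ : ℕ → ℕ) : BCt → BCt
    | .cvar a => .cvar a
    | .cons t e => .cons (brenLT ξ t) (brenLE ξ e)
    | .tmu c => .tmu (brenLC (upr ξ) c)
end

mutual
  /-- Renaming of μ-variables in λ̄μμ̃-terms. -/
  def brenMT (ξ : ℕ → ℕ) : BTm → BTm
    | .var x => .var x
    | .abs t => .abs (brenMT ξ t)
    | .mabs c => .mabs (brenMC (upr ξ) c)
  def brenMC (ξ : ℕ → ℕ) : BCm → BCm
    | .cut t e => .cut (brenMT ξ t) (brenME ξ e)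
  def brenME (ξ : ℕ → ℕ) : BCt → BCt
    | .cvar a => .cvar (ξ a)
    | .cons t e => .cons (brenMT ξ t) (brenME ξ e)
    | .tmu c => .tmu (brenMC ξ c)
end

def bupsL (σ : ℕ → BTm) : ℕ → BTm
  | 0 => .var 0
  | k+1 => brenLT Nat.succ (σ k)

mutual
  /-- Substitution for λ-variables in λ̄μμ̃-terms. -/
  def blsubT (σ : ℕ → BTm) : BTm → BTm
    | .var x => σ x
    | .abs t => .abs (blsubT (bupsL σ) t)
    | .mabs c => .mabs (blsubC (fun k => brenMT Nat.succ (σ k)) c)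
  def blsubC (σ : ℕ → BTm) : BCm → BCm
    | .cut t e => .cut (blsubT σ t) (blsubE σ e)
  def blsubE (σ : ℕ → BTm) : BCt → BCt
    | .cvar a => .cvar a
    | .cons t e => .cons (blsubT σ t) (blsubE σ e)
    | .tmu c => .tmu (blsubC (bupsL σ) c)
end

def bsub1L (x : ℕ) (u : BTm) : ℕ → BTm := fun k => if k = x then u else .var k

def bsub0L (u : BTm) : ℕ → BTm
  | 0 => u
  | k+1 => .var k

def bupsM (σ : ℕ → BCt) : ℕ → BCt
  | 0 => .cvar 0
  | k+1 => brenME Nat.succ (σ k)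

mutual
  /-- Structural substitution of contexts for μ-variables in λ̄μμ̃-terms. -/
  def bmsubT (σ : ℕ → BCt) : BTm → BTm
    | .var x => .var x
    | .abs t => .abs (bmsubT (fun k => brenLE Nat.succ (σ k)) t)
    | .mabs c => .mabs (bmsubC (bupsM σ) c)
  def bmsubC (σ : ℕ → BCt) : BCm → BCm
    | .cut t e => .cut (bmsubT σ t) (bmsubE σ e)
  def bmsubE (σ : ℕ → BCt) : BCt → BCt
    | .cvar a => σ a
    | .cons t e => .cons (bmsubT σ t) (bmsubE σ e)
    | .tmu c => .tmu (bmsubC (fun k => brenLE Nat.succ (σ k)) c)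
end

def bsub1M (a : ℕ) (e : BCt) : ℕ → BCt := fun k => if k = a then e else .cvar k

def bsub0M (e : BCt) : ℕ → BCt
  | 0 => e
  | k+1 => .cvar k

mutual
  /-- Number of free occurrences of the λ-variable `x` in a λ̄μμ̃-term. -/
  def bcntLT (x : ℕ) : BTm → ℕ
    | .var y => if y = x then 1 else 0
    | .abs t => bcntLT (x+1) t
    | .mabs c => bcntLC x c
  def bcntLC (x : ℕ) : BCm → ℕ
    | .cut t e => bcntLT x t + bcntLE x e
  def bcntLE (x : ℕ) : BCt → ℕ
    | .cvar _ => 0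
    | .cons t e => bcntLT x t + bcntLE x e
    | .tmu c => bcntLC (x+1) c
end

mutual
  /-- Number of free occurrences of the μ-variable `a` in a λ̄μμ̃-term. -/
  def bcntMT (a : ℕ) : BTm → ℕ
    | .var _ => 0
    | .abs t => bcntMT a t
    | .mabs c => bcntMC (a+1) c
  def bcntMC (a : ℕ) : BCm → ℕ
    | .cut t e => bcntMT a t + bcntME a e
  def bcntME (a : ℕ) : BCt → ℕ
    | .cvar b => if b = a then 1 else 0
    | .cons t e => bcntMT a t + bcntME a e
    | .tmu c => bcntMC a c
end

/-- λ̄μμ̃-values `v ::= x | λx.t`. -/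
inductive BIsVal : BTm → Prop
  | var (x : ℕ) : BIsVal (.var x)
  | abs (t : BTm) : BIsVal (.abs t)

/-- Stacks (the contexts of λ̄μμ̃_T): `s ::= α | t · s`. -/
inductive IsStk : BCt → Prop
  | cvar (a : ℕ) : IsStk (.cvar a)
  | cons (t : BTm) {s : BCt} : IsStk s → IsStk (.cons t s)

/-! ### Reduction in λ̄μμ̃: congruence closure of root rules -/

mutual
  inductive JT (R1 : BTm → BTm → Prop) (R2 : BCm → BCm → Prop) : BTm → BTm → Prop
    | root {t t'} : R1 t t' → JT R1 R2 t t'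
    | absC {t t'} : JT R1 R2 t t' → JT R1 R2 (.abs t) (.abs t')
    | mabsC {c c'} : JC R1 R2 c c' → JT R1 R2 (.mabs c) (.mabs c')
  inductive JC (R1 : BTm → BTm → Prop) (R2 : BCm → BCm → Prop) : BCm → BCm → Prop
    | root {c c'} : R2 c c' → JC R1 R2 c c'
    | cutL {t t'} (e) : JT R1 R2 t t' → JC R1 R2 (.cut t e) (.cut t' e)
    | cutR (t) {e e'} : JE R1 R2 e e' → JC R1 R2 (.cut t e) (.cut t e')
  inductive JE (R1 : BTm → BTm → Prop) (R2 : BCm → BCm → Prop) : BCt → BCt → Prop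
    | consL {t t'} (e) : JT R1 R2 t t' → JE R1 R2 (.cons t e) (.cons t' e)
    | consR (t) {e e'} : JE R1 R2 e e' → JE R1 R2 (.cons t e) (.cons t e')
    | tmuC {c c'} : JC R1 R2 c c' → JE R1 R2 (.tmu c) (.tmu c')
end

/-- The term-level root rule of λ̄μμ̃: θ (shared by all evaluation disciplines). -/
inductive BRootT : BTm → BTm → Prop
  | theta (t : BTm) : BRootT (.mabs (.cut (brenMT Nat.succ t) (.cvar 0))) t

/-- Command-level root rules of the undirected λ̄μμ̃-calculus: β, μ, μ̃. -/
inductive BRootC : BCm → BCm → Prop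
  | beta (u t : BTm) (e : BCt) :
      BRootC (.cut (.abs u) (.cons t e)) (.cut t (.tmu (.cut u (brenLE Nat.succ e))))
  | mu (c : BCm) (e : BCt) : BRootC (.cut (.mabs c) e) (bmsubC (bsub0M e) c)
  | mutilde (t : BTm) (c : BCm) : BRootC (.cut t (.tmu c)) (blsubC (bsub0L t) c)

/-- Command-level *linear* root rules of λ̄μμ̃: β always; μ (resp. μ̃) when the
substituted context (resp. term) is a variable or the bound variable occurs
exactly once in the command. -/
inductive BRootClin : BCm → BCm → Prop
  | beta (u t : BTm) (e : BCt) :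
      BRootClin (.cut (.abs u) (.cons t e)) (.cut t (.tmu (.cut u (brenLE Nat.succ e))))
  | mu (c : BCm) (e : BCt) : ((∃ a, e = BCt.cvar a) ∨ bcntMC 0 c = 1) →
      BRootClin (.cut (.mabs c) e) (bmsubC (bsub0M e) c)
  | mutilde (t : BTm) (c : BCm) : ((∃ x, t = BTm.var x) ∨ bcntLC 0 c = 1) →
      BRootClin (.cut t (.tmu c)) (blsubC (bsub0L t) c)

/-- Command-level root rules of call-by-name λ̄μμ̃ (λ̄μμ̃_T): β, μₙ (stacks), μ̃. -/
inductive BRootCn : BCm → BCm → Prop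
  | beta (u t : BTm) (e : BCt) :
      BRootCn (.cut (.abs u) (.cons t e)) (.cut t (.tmu (.cut u (brenLE Nat.succ e))))
  | mun (c : BCm) (s : BCt) : IsStk s → BRootCn (.cut (.mabs c) s) (bmsubC (bsub0M s) c)
  | mutilde (t : BTm) (c : BCm) : BRootCn (.cut t (.tmu c)) (blsubC (bsub0L t) c)

/-- Command-level *linear call-by-name* root rules of λ̄μμ̃. -/
inductive BRootCnlin : BCm → BCm → Prop
  | beta (u t : BTm) (e : BCt) :
      BRootCnlin (.cut (.abs u) (.cons t e)) (.cut t (.tmu (.cut u (brenLE Nat.succ e))))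
  | mun (c : BCm) (s : BCt) : IsStk s → ((∃ a, s = BCt.cvar a) ∨ bcntMC 0 c = 1) →
      BRootCnlin (.cut (.mabs c) s) (bmsubC (bsub0M s) c)
  | mutilde (t : BTm) (c : BCm) : ((∃ x, t = BTm.var x) ∨ bcntLC 0 c = 1) →
      BRootCnlin (.cut t (.tmu c)) (blsubC (bsub0L t) c)

/-- Command-level root rules of call-by-value λ̄μμ̃ (λ̄μμ̃_Q): β, μ, μ̃ᵥ (values). -/
inductive BRootCv : BCm → BCm → Prop
  | beta (u t : BTm) (e : BCt) :
      BRootCv (.cut (.abs u) (.cons t e)) (.cut t (.tmu (.cut u (brenLE Nat.succ e))))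
  | mu (c : BCm) (e : BCt) : BRootCv (.cut (.mabs c) e) (bmsubC (bsub0M e) c)
  | mutildev (v : BTm) (c : BCm) : BIsVal v →
      BRootCv (.cut v (.tmu c)) (blsubC (bsub0L v) c)

/-- Command-level *linear call-by-value* root rules of λ̄μμ̃. -/
inductive BRootCvlin : BCm → BCm → Prop
  | beta (u t : BTm) (e : BCt) :
      BRootCvlin (.cut (.abs u) (.cons t e)) (.cut t (.tmu (.cut u (brenLE Nat.succ e))))
  | mu (c : BCm) (e : BCt) : ((∃ a, e = BCt.cvar a) ∨ bcntMC 0 c = 1) →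
      BRootCvlin (.cut (.mabs c) e) (bmsubC (bsub0M e) c)
  | mutildev (v : BTm) (c : BCm) : BIsVal v → ((∃ x, v = BTm.var x) ∨ bcntLC 0 c = 1) →
      BRootCvlin (.cut v (.tmu c)) (blsubC (bsub0L v) c)

/-- Command-level root rules with β' instead of β: β', μ, μ̃. -/
inductive BRootCp : BCm → BCm → Prop
  | beta' (u t : BTm) (e : BCt) :
      BRootCp (.cut (.abs u) (.cons t e)) (.cut (blsubT (bsub0L t) u) e)
  | mu (c : BCm) (e : BCt) : BRootCp (.cut (.mabs c) e) (bmsubC (bsub0M e) c)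
  | mutilde (t : BTm) (c : BCm) : BRootCp (.cut t (.tmu c)) (blsubC (bsub0L t) c)

/-- Command-level call-by-name root rules with β': β', μₙ, μ̃. -/
inductive BRootCnp : BCm → BCm → Prop
  | beta' (u t : BTm) (e : BCt) :
      BRootCnp (.cut (.abs u) (.cons t e)) (.cut (blsubT (bsub0L t) u) e)
  | mun (c : BCm) (s : BCt) : IsStk s → BRootCnp (.cut (.mabs c) s) (bmsubC (bsub0M s) c)
  | mutilde (t : BTm) (c : BCm) : BRootCnp (.cut t (.tmu c)) (blsubC (bsub0L t) c)

/-- Command-level call-by-value root rules with β': β' (values), μ, μ̃ᵥ. -/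
inductive BRootCvp : BCm → BCm → Prop
  | beta' (u v : BTm) (e : BCt) : BIsVal v →
      BRootCvp (.cut (.abs u) (.cons v e)) (.cut (blsubT (bsub0L v) u) e)
  | mu (c : BCm) (e : BCt) : BRootCvp (.cut (.mabs c) e) (bmsubC (bsub0M e) c)
  | mutildev (v : BTm) (c : BCm) : BIsVal v →
      BRootCvp (.cut v (.tmu c)) (blsubC (bsub0L v) c)

/-- One-step λ̄μμ̃-reduction (β, μ, μ̃, θ), terms. -/
abbrev BStepT := JT BRootT BRootC
abbrev BStepC := JC BRootT BRootC
abbrev BStepE := JE BRootT BRootC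
/-- One-step linear λ̄μμ̃-reduction. -/
abbrev LBStepT := JT BRootT BRootClin
abbrev LBStepC := JC BRootT BRootClin
abbrev LBStepE := JE BRootT BRootClin
/-- One-step call-by-name λ̄μμ̃-reduction. -/
abbrev BStepNT := JT BRootT BRootCn
abbrev BStepNC := JC BRootT BRootCn
abbrev BStepNE := JE BRootT BRootCn
/-- One-step linear call-by-name λ̄μμ̃-reduction. -/
abbrev LBStepNT := JT BRootT BRootCnlin
abbrev LBStepNC := JC BRootT BRootCnlin
/-- One-step call-by-value λ̄μμ̃-reduction. -/
abbrev BStepVT := JT BRootT BRootCv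
abbrev BStepVC := JC BRootT BRootCv
/-- One-step linear call-by-value λ̄μμ̃-reduction. -/
abbrev LBStepVT := JT BRootT BRootCvlin
abbrev LBStepVC := JC BRootT BRootCvlin
/-- One-step λ̄μμ̃-reduction with β' (β', μ, μ̃, θ). -/
abbrev BStepPT := JT BRootT BRootCp
abbrev BStepPC := JC BRootT BRootCp
/-- One-step call-by-name λ̄μμ̃-reduction with β'. -/
abbrev BStepNPT := JT BRootT BRootCnp
abbrev BStepNPC := JC BRootT BRootCnp
/-- One-step call-by-value λ̄μμ̃-reduction with β'. -/
abbrev BStepVPT := JT BRootT BRootCvp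
abbrev BStepVPC := JC BRootT BRootCvp

/-! ## The translation `(·)†` from λμ to λ̄μμ̃ -/

mutual
  /-- `x† = x`, `(λx.u)† = λx.u†`, `(u v)† = μβ.⟨v† | μ̃y.⟨u† | y·β⟩⟩`
  (`y`, `β` fresh, realized by de Bruijn lifting), `(μα.c)† = μα.c†`. -/
  def dagT : Tm → BTm
    | .var x => .var x
    | .abs t => .abs (dagT t)
    | .app u v => .mabs (.cut (brenMT Nat.succ (dagT v))
        (.tmu (.cut (brenLT Nat.succ (brenMT Nat.succ (dagT u)))
          (.cons (.var 0) (.cvar 0)))))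
    | .mabs c => .mabs (dagC c)
  /-- `([α]t)† = ⟨t† | α⟩`. -/
  def dagC : Cm → BCm
    | .cmd a t => .cut (dagT t) (.cvar a)
end

/-- `⟨α⟩† = α`, `(⟨β⟩(t ·))† = μ̃y.⟨t† | y·β⟩`, `(h · t)† = t† · h†`. -/
def dagE : Ct → BCt
  | .cvar a => .cvar a
  | .push b t => .tmu (.cut (brenLT Nat.succ (dagT t)) (.cons (.var 0) (.cvar b)))
  | .cons e t => .cons (dagT t) (dagE e)

/-! ## The translation `(·)∘` from λ̄μμ̃ to λμ -/

mutual
  /-- `x∘ = x`, `(λx.u)∘ = λx.u∘`, `(μα.c)∘ = μα.c∘`. -/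
  def circT : BTm → Tm
    | .var x => .var x
    | .abs t => .abs (circT t)
    | .mabs c => .mabs (circC c)
  /-- `⟨t | e⟩∘ = e∘⟨t∘⟩`. -/
  def circC : BCm → Cm
    | .cut t e => fill (circE e) (circT t)
  /-- `α∘ = ⟨α⟩`, `(t · h)∘ = h∘ · t∘`,
  `(μ̃x.c)∘ = ⟨β⟩((λx.μδ.c∘) ·)` with `δ ∉ c` (realized by lifting). -/
  def circE : BCt → Ct
    | .cvar a => .cvar a
    | .cons t e => .cons (circE e) (circT t)
    | .tmu c => .push 0 (.abs (.mabs (renMC Nat.succ (circC c))))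
end


/-! ### Auxiliary lemmas -/

theorem upr_upr (ξ1 ξ2 : ℕ → ℕ) :
    (fun k => upr ξ1 (upr ξ2 k)) = upr (fun k => ξ1 (ξ2 k)) := by
  funext k; cases k <;> rfl

mutual
theorem brenMT_brenMT : ∀ (t : BTm) (ξ1 ξ2 : ℕ → ℕ),
    brenMT ξ1 (brenMT ξ2 t) = brenMT (fun k => ξ1 (ξ2 k)) t
  | .var x, _, _ => rfl
  | .abs t, ξ1, ξ2 => by simp [brenMT, brenMT_brenMT t]
  | .mabs c, ξ1, ξ2 => by simp [brenMT, brenMC_brenMC c, upr_upr]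
theorem brenMC_brenMC : ∀ (c : BCm) (ξ1 ξ2 : ℕ → ℕ),
    brenMC ξ1 (brenMC ξ2 c) = brenMC (fun k => ξ1 (ξ2 k)) c
  | .cut t e, ξ1, ξ2 => by simp [brenMC, brenMT_brenMT t, brenME_brenME e]
theorem brenME_brenME : ∀ (e : BCt) (ξ1 ξ2 : ℕ → ℕ),
    brenME ξ1 (brenME ξ2 e) = brenME (fun k => ξ1 (ξ2 k)) e
  | .cvar a, _, _ => rfl
  | .cons t e, ξ1, ξ2 => by simp [brenME, brenMT_brenMT t, brenME_brenME e]
  | .tmu c, ξ1, ξ2 => by simp [brenME, brenMC_brenMC c]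
end

mutual
theorem brenMT_brenLT : ∀ (t : BTm) (ζ ξ : ℕ → ℕ),
    brenMT ζ (brenLT ξ t) = brenLT ξ (brenMT ζ t)
  | .var x, _, _ => rfl
  | .abs t, ζ, ξ => by simp [brenMT, brenLT, brenMT_brenLT t]
  | .mabs c, ζ, ξ => by simp [brenMT, brenLT, brenMC_brenLC c]
theorem brenMC_brenLC : ∀ (c : BCm) (ζ ξ : ℕ → ℕ),
    brenMC ζ (brenLC ξ c) = brenLC ξ (brenMC ζ c)
  | .cut t e, ζ, ξ => by simp [brenMC, brenLC, brenMT_brenLT t, brenME_brenLE e]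
theorem brenME_brenLE : ∀ (e : BCt) (ζ ξ : ℕ → ℕ),
    brenME ζ (brenLE ξ e) = brenLE ξ (brenME ζ e)
  | .cvar a, _, _ => rfl
  | .cons t e, ζ, ξ => by simp [brenME, brenLE, brenMT_brenLT t, brenME_brenLE e]
  | .tmu c, ζ, ξ => by simp [brenME, brenLE, brenMC_brenLC c]
end

mutual
theorem dagT_renMT : ∀ (t : Tm) (ξ : ℕ → ℕ), dagT (renMT ξ t) = brenMT ξ (dagT t)
  | .var x, _ => rfl
  | .abs t, ξ => by simp [renMT, dagT, brenMT, dagT_renMT t]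
  | .app u v, ξ => by
      simp only [renMT, dagT, brenMT, brenMC, brenME, brenLT, dagT_renMT u, dagT_renMT v,
        brenMT_brenMT, brenMT_brenLT, upr]
  | .mabs c, ξ => by simp [renMT, dagT, brenMT, dagC_renMC c]
theorem dagC_renMC : ∀ (c : Cm) (ξ : ℕ → ℕ), dagC (renMC ξ c) = brenMC ξ (dagC c)
  | .cmd a t, ξ => by simp [renMC, dagC, brenMC, brenME, dagT_renMT t]
end

theorem bupsM_upr (σ : ℕ → BCt) (ξ : ℕ → ℕ) :
    (fun k => bupsM σ (upr ξ k)) = bupsM (fun k => σ (ξ k)) := by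
  funext k; cases k <;> rfl

mutual
theorem bmsubT_brenMT : ∀ (t : BTm) (σ : ℕ → BCt) (ξ : ℕ → ℕ),
    bmsubT σ (brenMT ξ t) = bmsubT (fun k => σ (ξ k)) t
  | .var x, _, _ => rfl
  | .abs t, σ, ξ => by simp [brenMT, bmsubT, bmsubT_brenMT t]
  | .mabs c, σ, ξ => by simp [brenMT, bmsubT, bmsubC_brenMC c, bupsM_upr]
theorem bmsubC_brenMC : ∀ (c : BCm) (σ : ℕ → BCt) (ξ : ℕ → ℕ),
    bmsubC σ (brenMC ξ c) = bmsubC (fun k => σ (ξ k)) c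
  | .cut t e, σ, ξ => by simp [brenMC, bmsubC, bmsubT_brenMT t, bmsubE_brenME e]
theorem bmsubE_brenME : ∀ (e : BCt) (σ : ℕ → BCt) (ξ : ℕ → ℕ),
    bmsubE σ (brenME ξ e) = bmsubE (fun k => σ (ξ k)) e
  | .cvar a, _, _ => rfl
  | .cons t e, σ, ξ => by simp [brenME, bmsubE, bmsubT_brenMT t, bmsubE_brenME e]
  | .tmu c, σ, ξ => by simp [brenME, bmsubE, bmsubC_brenMC c]
end

theorem bupsM_cvar : bupsM (fun k => BCt.cvar k) = fun k => BCt.cvar k := by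
  funext k; cases k <;> rfl

mutual
theorem bmsubT_id : ∀ (t : BTm), bmsubT (fun k => .cvar k) t = t
  | .var x => rfl
  | .abs t => by simp [bmsubT, brenLE]; exact bmsubT_id t
  | .mabs c => by simp [bmsubT, bupsM_cvar]; exact bmsubC_id c
theorem bmsubC_id : ∀ (c : BCm), bmsubC (fun k => .cvar k) c = c
  | .cut t e => by simp [bmsubC, bmsubT_id t, bmsubE_id e]
theorem bmsubE_id : ∀ (e : BCt), bmsubE (fun k => .cvar k) e = e
  | .cvar a => rfl
  | .cons t e => by simp [bmsubE, bmsubT_id t, bmsubE_id e]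
  | .tmu c => by simp [bmsubE, brenLE]; exact bmsubC_id c
end

theorem bupsL_upr (σ : ℕ → BTm) (ξ : ℕ → ℕ) :
    (fun k => bupsL σ (upr ξ k)) = bupsL (fun k => σ (ξ k)) := by
  funext k; cases k <;> rfl

mutual
theorem blsubT_brenLT : ∀ (t : BTm) (σ : ℕ → BTm) (ξ : ℕ → ℕ),
    blsubT σ (brenLT ξ t) = blsubT (fun k => σ (ξ k)) t
  | .var x, _, _ => rfl
  | .abs t, σ, ξ => by simp [brenLT, blsubT, blsubT_brenLT t, bupsL_upr]
  | .mabs c, σ, ξ => by simp [brenLT, blsubT, blsubC_brenLC c]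
theorem blsubC_brenLC : ∀ (c : BCm) (σ : ℕ → BTm) (ξ : ℕ → ℕ),
    blsubC σ (brenLC ξ c) = blsubC (fun k => σ (ξ k)) c
  | .cut t e, σ, ξ => by simp [brenLC, blsubC, blsubT_brenLT t, blsubE_brenLE e]
theorem blsubE_brenLE : ∀ (e : BCt) (σ : ℕ → BTm) (ξ : ℕ → ℕ),
    blsubE σ (brenLE ξ e) = blsubE (fun k => σ (ξ k)) e
  | .cvar a, _, _ => rfl
  | .cons t e, σ, ξ => by simp [brenLE, blsubE, blsubT_brenLT t, blsubE_brenLE e]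
  | .tmu c, σ, ξ => by simp [brenLE, blsubE, blsubC_brenLC c, bupsL_upr]
end

theorem bupsL_var : bupsL (fun k => BTm.var k) = fun k => BTm.var k := by
  funext k; cases k <;> rfl

mutual
theorem blsubT_id : ∀ (t : BTm), blsubT (fun k => .var k) t = t
  | .var x => rfl
  | .abs t => by simp [blsubT, bupsL_var]; exact blsubT_id t
  | .mabs c => by simp [blsubT, brenMT]; exact blsubC_id c
theorem blsubC_id : ∀ (c : BCm), blsubC (fun k => .var k) c = c
  | .cut t e => by simp [blsubC, blsubT_id t, blsubE_id e]
theorem blsubE_id : ∀ (e : BCt), blsubE (fun k => .var k) e = e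
  | .cvar a => rfl
  | .cons t e => by simp [blsubE, blsubT_id t, blsubE_id e]
  | .tmu c => by simp [blsubE, bupsL_var]; exact blsubC_id c
end

mutual
theorem bcntMT_brenMT : ∀ (t : BTm) (ξ : ℕ → ℕ) (a : ℕ), (∀ k, ξ k ≠ a) →
    bcntMT a (brenMT ξ t) = 0
  | .var x, _, _, _ => rfl
  | .abs t, ξ, a, h => by simp [brenMT, bcntMT]; exact bcntMT_brenMT t ξ a h
  | .mabs c, ξ, a, h => by
      simp [brenMT, bcntMT]
      exact bcntMC_brenMC c (upr ξ) (a+1) (fun k => by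
        cases k with
        | zero => simp [upr]
        | succ k => simp [upr]; exact h k)
theorem bcntMC_brenMC : ∀ (c : BCm) (ξ : ℕ → ℕ) (a : ℕ), (∀ k, ξ k ≠ a) →
    bcntMC a (brenMC ξ c) = 0
  | .cut t e, ξ, a, h => by
      simp [brenMC, bcntMC, bcntMT_brenMT t ξ a h, bcntME_brenME e ξ a h]
theorem bcntME_brenME : ∀ (e : BCt) (ξ : ℕ → ℕ) (a : ℕ), (∀ k, ξ k ≠ a) →
    bcntME a (brenME ξ e) = 0
  | .cvar b, ξ, a, h => by simp [brenME, bcntME]; exact h b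
  | .cons t e, ξ, a, h => by
      simp [brenME, bcntME, bcntMT_brenMT t ξ a h, bcntME_brenME e ξ a h]
  | .tmu c, ξ, a, h => by simp [brenME, bcntME]; exact bcntMC_brenMC c ξ a h
end

mutual
theorem bcntMT_brenLT : ∀ (t : BTm) (ξ : ℕ → ℕ) (a : ℕ),
    bcntMT a (brenLT ξ t) = bcntMT a t
  | .var x, _, _ => rfl
  | .abs t, ξ, a => by simp [brenLT, bcntMT, bcntMT_brenLT t]
  | .mabs c, ξ, a => by simp [brenLT, bcntMT, bcntMC_brenLC c]
theorem bcntMC_brenLC : ∀ (c : BCm) (ξ : ℕ → ℕ) (a : ℕ),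
    bcntMC a (brenLC ξ c) = bcntMC a c
  | .cut t e, ξ, a => by simp [brenLC, bcntMC, bcntMT_brenLT t, bcntME_brenLE e]
theorem bcntME_brenLE : ∀ (e : BCt) (ξ : ℕ → ℕ) (a : ℕ),
    bcntME a (brenLE ξ e) = bcntME a e
  | .cvar b, _, _ => rfl
  | .cons t e, ξ, a => by simp [brenLE, bcntME, bcntMT_brenLT t, bcntME_brenLE e]
  | .tmu c, ξ, a => by simp [brenLE, bcntME, bcntMC_brenLC c]
end

mutual
theorem bcntLT_brenLT : ∀ (t : BTm) (ξ : ℕ → ℕ) (a : ℕ), (∀ k, ξ k ≠ a) →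
    bcntLT a (brenLT ξ t) = 0
  | .var x, ξ, a, h => by simp [brenLT, bcntLT]; exact h x
  | .abs t, ξ, a, h => by
      simp [brenLT, bcntLT]
      exact bcntLT_brenLT t (upr ξ) (a+1) (fun k => by
        cases k with
        | zero => simp [upr]
        | succ k => simp [upr]; exact h k)
  | .mabs c, ξ, a, h => by simp [brenLT, bcntLT]; exact bcntLC_brenLC c ξ a h
theorem bcntLC_brenLC : ∀ (c : BCm) (ξ : ℕ → ℕ) (a : ℕ), (∀ k, ξ k ≠ a) →
    bcntLC a (brenLC ξ c) = 0
  | .cut t e, ξ, a, h => by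
      simp [brenLC, bcntLC, bcntLT_brenLT t ξ a h, bcntLE_brenLE e ξ a h]
theorem bcntLE_brenLE : ∀ (e : BCt) (ξ : ℕ → ℕ) (a : ℕ), (∀ k, ξ k ≠ a) →
    bcntLE a (brenLE ξ e) = 0
  | .cvar b, _, _, _ => rfl
  | .cons t e, ξ, a, h => by
      simp [brenLE, bcntLE, bcntLT_brenLT t ξ a h, bcntLE_brenLE e ξ a h]
  | .tmu c, ξ, a, h => by
      simp [brenLE, bcntLE]
      exact bcntLC_brenLC c (upr ξ) (a+1) (fun k => by
        cases k with
        | zero => simp [upr]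
        | succ k => simp [upr]; exact h k)
end

theorem succ_ne (a k : ℕ) : Nat.succ k ≠ 0 := Nat.succ_ne_zero k

/-! ### Star congruence lemmas -/

theorem star_absB {t t' : BTm} (h : Star LBStepT t t') :
    Star LBStepT (.abs t) (.abs t') :=
  Relation.ReflTransGen.lift BTm.abs (fun _ _ => JT.absC) _ _ h

theorem star_mabsB {c c' : BCm} (h : Star LBStepC c c') :
    Star LBStepT (.mabs c) (.mabs c') :=
  Relation.ReflTransGen.lift BTm.mabs (fun _ _ => JT.mabsC) _ _ h

theorem star_cutL {t t' : BTm} (e : BCt) (h : Star LBStepT t t') :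
    Star LBStepC (.cut t e) (.cut t' e) :=
  Relation.ReflTransGen.lift (fun t => BCm.cut t e) (fun _ _ => JC.cutL e) _ _ h

theorem star_cutR (t : BTm) {e e' : BCt} (h : Star LBStepE e e') :
    Star LBStepC (.cut t e) (.cut t e') :=
  Relation.ReflTransGen.lift (fun e => BCm.cut t e) (fun _ _ => JC.cutR t) _ _ h

theorem star_consL {t t' : BTm} (e : BCt) (h : Star LBStepT t t') :
    Star LBStepE (.cons t e) (.cons t' e) :=
  Relation.ReflTransGen.lift (fun t => BCt.cons t e) (fun _ _ => JE.consL e) _ _ h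

theorem star_consR (t : BTm) {e e' : BCt} (h : Star LBStepE e e') :
    Star LBStepE (.cons t e) (.cons t e') :=
  Relation.ReflTransGen.lift (fun e => BCt.cons t e) (fun _ _ => JE.consR t) _ _ h

theorem star_tmuB {c c' : BCm} (h : Star LBStepC c c') :
    Star LBStepE (.tmu c) (.tmu c') :=
  Relation.ReflTransGen.lift BCt.tmu (fun _ _ => JE.tmuC) _ _ h

theorem bmsub_shift (E : BCt) (V : BTm) :
    bmsubT (bsub0M E) (brenMT Nat.succ V) = V := by
  rw [bmsubT_brenMT]
  rw [show (fun k => bsub0M E (Nat.succ k)) = (fun k => BCt.cvar k) from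
    funext fun k => rfl]
  exact bmsubT_id V

theorem bmsub_shift2 (E : BCt) (U : BTm) :
    bmsubT (fun k => brenLE Nat.succ (bsub0M E k)) (brenLT Nat.succ (brenMT Nat.succ U)) =
      brenLT Nat.succ U := by
  rw [← brenMT_brenLT, bmsubT_brenMT]
  rw [show (fun k => brenLE Nat.succ (bsub0M E (Nat.succ k))) = (fun k => BCt.cvar k) from
    funext fun k => by simp [bsub0M, brenLE]]
  exact bmsubT_id _

theorem keyM (V U : BTm) (E : BCt) :
    bmsubC (bsub0M E)
      (.cut (brenMT Nat.succ V)
        (.tmu (.cut (brenLT Nat.succ (brenMT Nat.succ U)) (.cons (.var 0) (.cvar 0))))) =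
    .cut V (.tmu (.cut (brenLT Nat.succ U) (.cons (.var 0) (brenLE Nat.succ E)))) := by
  have z : bsub0M E 0 = E := rfl
  simp only [bmsubC, bmsubE, bmsubT, bmsub_shift, bmsub_shift2, z]

theorem blsub_shiftT (X T : BTm) : blsubT (bsub0L X) (brenLT Nat.succ T) = T := by
  rw [blsubT_brenLT]
  rw [show (fun k => bsub0L X (Nat.succ k)) = (fun k => BTm.var k) from
    funext fun k => rfl]
  exact blsubT_id T

theorem blsub_shiftE (X : BTm) (E : BCt) : blsubE (bsub0L X) (brenLE Nat.succ E) = E := by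
  rw [blsubE_brenLE]
  rw [show (fun k => bsub0L X (Nat.succ k)) = (fun k => BTm.var k) from
    funext fun k => rfl]
  exact blsubE_id E

theorem keyL (X T : BTm) (E : BCt) :
    blsubC (bsub0L X)
      (.cut (brenLT Nat.succ T) (.cons (.var 0) (brenLE Nat.succ E))) =
    .cut T (.cons X E) := by
  simp only [blsubC, blsubE, blsubT, blsub_shiftT, blsub_shiftE, bsub0L]

theorem eq2 (Y : BCm) :
    blsubT (bsub0L (BTm.var 0)) (.mabs (brenLC (upr Nat.succ) Y)) = .mabs Y := by
  simp only [blsubT, blsubC_brenLC]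
  rw [show (fun k => brenMT Nat.succ (bsub0L (BTm.var 0) (upr Nat.succ k))) =
      (fun k => BTm.var k) from
    funext fun k => by cases k <;> simp [upr, bsub0L, brenMT]]
  exact congrArg BTm.mabs (blsubC_id Y)

theorem eq3 (C : BCm) : bmsubC (bsub0M (.cvar 0)) (brenMC Nat.succ C) = C := by
  rw [bmsubC_brenMC]
  rw [show (fun k => bsub0M (BCt.cvar 0) (Nat.succ k)) = (fun k => BCt.cvar k) from
    funext fun k => rfl]
  exact bmsubC_id C

theorem tmu_chain (C : BCm) :
    Star LBStepE
      (.tmu (.cut (brenLT Nat.succ (.abs (.mabs (brenMC Nat.succ C))))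
        (.cons (.var 0) (.cvar 0))))
      (.tmu C) := by
  set Y := brenMC Nat.succ C with hY
  set U0 : BTm := .mabs (brenLC (upr Nat.succ) Y) with hU0
  have e0 : brenLT Nat.succ (BTm.abs (.mabs Y)) = .abs U0 := by
    simp [brenLT, hU0]
  rw [e0]
  have s1 : LBStepC (.cut (.abs U0) (.cons (.var 0) (.cvar 0)))
      (.cut (.var 0) (.tmu (.cut U0 (.cvar 0)))) := by
    have h := JC.root (R1 := BRootT) (BRootClin.beta U0 (.var 0) (.cvar 0))
    simpa [brenLE] using h
  have s2 : LBStepC (.cut (.var 0) (.tmu (.cut U0 (.cvar 0))))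
      (.cut (.mabs Y) (.cvar 0)) := by
    have h := JC.root (R1 := BRootT)
      (BRootClin.mutilde (.var 0) (.cut U0 (.cvar 0)) (Or.inl ⟨0, rfl⟩))
    have e : blsubC (bsub0L (BTm.var 0)) (.cut U0 (.cvar 0)) =
        .cut (.mabs Y) (.cvar 0) := by
      simp only [blsubC, blsubE, hU0, eq2]
    rwa [e] at h
  have s3 : LBStepC (.cut (.mabs Y) (.cvar 0)) C := by
    have h := JC.root (R1 := BRootT)
      (BRootClin.mu Y (.cvar 0) (Or.inl ⟨0, rfl⟩))
    rwa [hY, eq3] at h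
  exact Relation.ReflTransGen.head (JE.tmuC s1)
    (Relation.ReflTransGen.head (JE.tmuC s2)
      (Relation.ReflTransGen.single (JE.tmuC s3)))

theorem fill_dag : ∀ (E : Ct) (T : Tm),
    Star LBStepC (dagC (fill E T)) (.cut (dagT T) (dagE E))
  | .cvar a, T => by
      simp only [fill, dagC, dagE]
      exact Relation.ReflTransGen.refl
  | .push b u, T => by
      simp only [fill, dagC, dagT, dagE]
      refine Relation.ReflTransGen.single ?_
      have h := JC.root (R1 := BRootT)
        (BRootClin.mu (.cut (brenMT Nat.succ (dagT T))
          (.tmu (.cut (brenLT Nat.succ (brenMT Nat.succ (dagT u)))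
            (.cons (.var 0) (.cvar 0))))) (.cvar b) (Or.inl ⟨b, rfl⟩))
      have e : bmsubC (bsub0M (BCt.cvar b))
          (.cut (brenMT Nat.succ (dagT T))
            (.tmu (.cut (brenLT Nat.succ (brenMT Nat.succ (dagT u)))
              (.cons (.var 0) (.cvar 0))))) =
          .cut (dagT T) (.tmu (.cut (brenLT Nat.succ (dagT u))
            (.cons (.var 0) (.cvar b)))) := by
        rw [keyM]; simp [brenLE]
      rwa [e] at h
  | .cons h u, T => by
      refine (fill_dag h (.app T u)).trans ?_
      simp only [dagT, dagE]
      have lin1 : bcntMC 0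
          (.cut (brenMT Nat.succ (dagT u))
            (.tmu (.cut (brenLT Nat.succ (brenMT Nat.succ (dagT T)))
              (.cons (.var 0) (.cvar 0))))) = 1 := by
        simp [bcntMC, bcntMT, bcntME,
          bcntMT_brenMT _ _ _ (fun k => Nat.succ_ne_zero k), bcntMT_brenLT]
      have s1 := JC.root (R1 := BRootT)
        (BRootClin.mu (.cut (brenMT Nat.succ (dagT u))
          (.tmu (.cut (brenLT Nat.succ (brenMT Nat.succ (dagT T)))
            (.cons (.var 0) (.cvar 0))))) (dagE h) (Or.inr lin1))
      rw [keyM] at s1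
      have lin2 : bcntLC 0
          (.cut (brenLT Nat.succ (dagT T))
            (.cons (.var 0) (brenLE Nat.succ (dagE h)))) = 1 := by
        simp [bcntLC, bcntLT, bcntLE,
          bcntLT_brenLT _ _ _ (fun k => Nat.succ_ne_zero k),
          bcntLE_brenLE _ _ _ (fun k => Nat.succ_ne_zero k)]
      have s2 := JC.root (R1 := BRootT)
        (BRootClin.mutilde (dagT u)
          (.cut (brenLT Nat.succ (dagT T))
            (.cons (.var 0) (brenLE Nat.succ (dagE h)))) (Or.inr lin2))
      rw [keyL] at s2
      exact Relation.ReflTransGen.head s1 (Relation.ReflTransGen.single s2)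

mutual
theorem mainT : ∀ t : BTm, Star LBStepT (dagT (circT t)) t
  | .var x => .refl
  | .abs t => star_absB (mainT t)
  | .mabs c => star_mabsB (mainC c)
theorem mainC : ∀ c : BCm, Star LBStepC (dagC (circC c)) c
  | .cut t e => by
      have h := fill_dag (circE e) (circT t)
      refine (by simpa only [circC] using h :
        Star LBStepC (dagC (circC (.cut t e))) (.cut (dagT (circT t)) (dagE (circE e)))).trans ?_
      exact (star_cutL _ (mainT t)).trans (star_cutR _ (mainE e))
theorem mainE : ∀ e : BCt, Star LBStepE (dagE (circE e)) e
  | .cvar a => .refl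
  | .cons t e => (star_consL _ (mainT t)).trans (star_consR _ (mainE e))
  | .tmu c => by
      have e0 : dagE (circE (.tmu c)) =
          .tmu (.cut (brenLT Nat.succ (.abs (.mabs (brenMC Nat.succ (dagC (circC c))))))
            (.cons (.var 0) (.cvar 0))) := by
        simp [circE, dagE, dagT, dagC_renMC]
      rw [e0]
      exact (tmu_chain (dagC (circC c))).trans (star_tmuB (mainC c))
end


/-- for every λ̄μμ̃-term `t`, `(t∘)†` reduces to `t` by zero or
more linear λ̄μμ̃-reduction steps, and analogously for λ̄μμ̃-commands and
λ̄μμ̃-contexts. -/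
theorem circ_dag_composition :
    (∀ t : BTm, Star LBStepT (dagT (circT t)) t) ∧
    (∀ c : BCm, Star LBStepC (dagC (circC c)) c) ∧
    (∀ e : BCt, Star LBStepE (dagE (circE e)) e) := by
  exact ⟨mainT, mainC, mainE⟩

end CHSim
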